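/- Under the hypotheses of the Weak Rescaled Pure Greedy Algorithm WRPGA({t_k}, D) in a real Banach space X with modulus of smoothness ρ(u) ≤ γ u^q (1 < q ≤ 2, γ > 0), with weakness sequence t_k ∈ (0, 1], for f ∈ A_1(D, M) the iterates satisfy the explicit bound: for every m ≥ 2, ‖f − f_m‖ ≤ M · ( t_1^{q/(q−1)} + ((q−1)/q) (2γq)^{1/(1−q)} ∑_{k=2}^m t_k^{q/(q−1)} )^{1/q − 1}, where (f_m) is defined by f_0 = 0 and, for each m ≥ 1, if f_{m−1} = f then f_m := f, and otherwise φ_m ∈ D satisfies |F_{f−f_{m−1}}(φ_m)| ≥ t_m · sup_{φ∈D} |F_{f−f_{m−1}}(φ)| for a norming functional F_{f−f_{m−1}} of f − f_{m−1}, λ_m := sign(F_{f−f_{m−1}}(φ_m)) · ‖f − f_{m−1}‖ · (2γq)^{1/(1−q)} · |F_{f−f_{m−1}}(φ_m)|^{1/(q−1)}, ĥ_m := f_{m−1} + λ_m φ_m, and f_m := s_m ĥ_m with s_m ∈ ℝ minimizing ‖f − s ĥ_m‖ over s ∈ ℝ. -/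

import Mathlib

open scoped BigOperators

/-- A dictionary in a normed space: a set of norm-one elements with dense linear span. -/
def IsDictionary (X : Type*) [NormedAddCommGroup X] [NormedSpace ℝ X] (D : Set X) : Prop :=
  (∀ φ ∈ D, ‖φ‖ = 1) ∧ Dense (Submodule.span ℝ D : Set X)

/-- Finite linear combinations of dictionary elements with coefficients of total
absolute sum at most `M`. -/
def A1Pre (X : Type*) [NormedAddCommGroup X] [NormedSpace ℝ X] (D : Set X) (M : ℝ) : Set X :=
  {g | ∃ (n : ℕ) (c : Fin n → ℝ) (φ : Fin n → X),
    (∀ i, φ i ∈ D) ∧ (∑ i, |c i|) ≤ M ∧ g = ∑ i, c i • φ i}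

/-- The class `A₁(D, M)`: the closure of `A1Pre`. -/
def A1 (X : Type*) [NormedAddCommGroup X] [NormedSpace ℝ X] (D : Set X) (M : ℝ) : Set X :=
  closure (A1Pre X D M)

/-- The modulus of smoothness of a real normed space `X`:
`ρ(u) = sup{(‖f + u g‖ + ‖f − u g‖)/2 − 1 : ‖f‖ = ‖g‖ = 1}`. -/
noncomputable def modulusOfSmoothness (X : Type*) [NormedAddCommGroup X] [NormedSpace ℝ X]
    (u : ℝ) : ℝ :=
  sSup {x : ℝ | ∃ f g : X, ‖f‖ = 1 ∧ ‖g‖ = 1 ∧ x = (‖f + u • g‖ + ‖f - u • g‖) / 2 - 1}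

section aux
variable {X : Type*} [NormedAddCommGroup X] [NormedSpace ℝ X]

lemma modulus_mem_le {u : ℝ} (hu : 0 < u) {x : ℝ}
    (hx : x ∈ {x : ℝ | ∃ f g : X, ‖f‖ = 1 ∧ ‖g‖ = 1 ∧
      x = (‖f + u • g‖ + ‖f - u • g‖) / 2 - 1}) :
    x ≤ modulusOfSmoothness X u := by
  apply le_csSup
  · refine ⟨u, ?_⟩
    rintro y ⟨f, g, hf, hg, rfl⟩
    have hug : ‖u • g‖ = u := by rw [norm_smul, hg, Real.norm_eq_abs, abs_of_pos hu, mul_one]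
    have h1 : ‖f + u • g‖ ≤ 1 + u := by
      calc ‖f + u • g‖ ≤ ‖f‖ + ‖u • g‖ := norm_add_le _ _
        _ = 1 + u := by rw [hf, hug]
    have h2 : ‖f - u • g‖ ≤ 1 + u := by
      calc ‖f - u • g‖ ≤ ‖f‖ + ‖u • g‖ := norm_sub_le _ _
        _ = 1 + u := by rw [hf, hug]
    nlinarith
  · exact hx

lemma smooth_ineq {γ q : ℝ} (hq0 : q ≠ 0) (hγ : 0 < γ)
    (hρ : ∀ u : ℝ, 0 < u → modulusOfSmoothness X u ≤ γ * u ^ q)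
    {x y : X} (hx : x ≠ 0) :
    ‖x + y‖ + ‖x - y‖ ≤ 2 * ‖x‖ + 2 * γ * ‖x‖ * (‖y‖ / ‖x‖) ^ q := by
  have hxn : (0:ℝ) < ‖x‖ := norm_pos_iff.mpr hx
  rcases eq_or_ne y 0 with rfl | hy
  · simp only [norm_zero, add_zero, sub_zero, zero_div, Real.zero_rpow hq0, mul_zero]
    linarith
  · have hyn : (0:ℝ) < ‖y‖ := norm_pos_iff.mpr hy
    set u : ℝ := ‖y‖ / ‖x‖ with hu
    have hupos : 0 < u := div_pos hyn hxn
    set f : X := ‖x‖⁻¹ • x with hfdef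
    set g : X := ‖y‖⁻¹ • y with hgdef
    have hf1 : ‖f‖ = 1 := norm_smul_inv_norm hx
    have hg1 : ‖g‖ = 1 := norm_smul_inv_norm hy
    have hug : u • g = ‖x‖⁻¹ • y := by
      rw [hgdef, smul_smul]
      congr 1
      rw [hu]
      field_simp
    have hplus : f + u • g = ‖x‖⁻¹ • (x + y) := by
      rw [hug, hfdef, smul_add]
    have hminus : f - u • g = ‖x‖⁻¹ • (x - y) := by
      rw [hug, hfdef, smul_sub]
    have hmem : (‖f + u • g‖ + ‖f - u • g‖) / 2 - 1 ≤ modulusOfSmoothness X u :=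
      modulus_mem_le hupos ⟨f, g, hf1, hg1, rfl⟩
    have hle := hmem.trans (hρ u hupos)
    have hnp : ‖f + u • g‖ = ‖x‖⁻¹ * ‖x + y‖ := by
      rw [hplus, norm_smul, Real.norm_eq_abs, abs_of_pos (inv_pos.mpr hxn)]
    have hnm : ‖f - u • g‖ = ‖x‖⁻¹ * ‖x - y‖ := by
      rw [hminus, norm_smul, Real.norm_eq_abs, abs_of_pos (inv_pos.mpr hxn)]
    rw [hnp, hnm] at hle
    have := mul_le_mul_of_nonneg_left hle (le_of_lt (by positivity : (0:ℝ) < 2 * ‖x‖))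
    have hxne : ‖x‖ ≠ 0 := ne_of_gt hxn
    have h1 : 2 * ‖x‖ * ((‖x‖⁻¹ * ‖x + y‖ + ‖x‖⁻¹ * ‖x - y‖) / 2 - 1)
        = ‖x‖ * ‖x‖⁻¹ * (‖x + y‖ + ‖x - y‖) - 2 * ‖x‖ := by ring
    rw [h1, mul_inv_cancel₀ hxne, one_mul] at this
    linarith
end aux

section orth
variable {X : Type*} [NormedAddCommGroup X] [NormedSpace ℝ X]

lemma birkhoff_orth {γ q : ℝ} (hq1 : 1 < q) (hγ : 0 < γ)
    (hρ : ∀ u : ℝ, 0 < u → modulusOfSmoothness X u ≤ γ * u ^ q)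
    {x h : X} (hx : x ≠ 0)
    (hmin : ∀ τ : ℝ, ‖x‖ ≤ ‖x - τ • h‖)
    (F : X →L[ℝ] ℝ) (hF : ‖F‖ = 1) (hFx : F x = ‖x‖) : F h = 0 := by
  have hq0 : q ≠ 0 := by positivity
  have hq1' : (0:ℝ) < q - 1 := by linarith
  rcases eq_or_ne h 0 with rfl | hh
  · simp
  have hxn : (0:ℝ) < ‖x‖ := norm_pos_iff.mpr hx
  have hhn : (0:ℝ) < ‖h‖ := norm_pos_iff.mpr hh
  -- the key one-sided estimate
  have key : ∀ (h' : X), h' ≠ 0 → (∀ τ : ℝ, ‖x‖ ≤ ‖x - τ • h'‖) → F h' ≤ 0 := by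
    intro h' hh' hmin'
    have hhn' : (0:ℝ) < ‖h'‖ := norm_pos_iff.mpr hh'
    set K : ℝ := 2 * γ * ‖x‖ ^ ((1:ℝ) - q) * ‖h'‖ ^ q with hK
    have hKpos : 0 < K := by
      have := Real.rpow_pos_of_pos hxn ((1:ℝ) - q)
      have := Real.rpow_pos_of_pos hhn' q
      positivity
    have hstep : ∀ τ : ℝ, 0 < τ → F h' ≤ K * τ ^ (q - 1) := by
      intro τ hτ
      have hsm := smooth_ineq hq0 hγ hρ (x := x) (y := τ • h') hx
      have hFb : F (x + τ • h') ≤ ‖x + τ • h'‖ := by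
        calc F (x + τ • h') ≤ ‖F (x + τ • h')‖ := le_abs_self _
          _ ≤ ‖F‖ * ‖x + τ • h'‖ := F.le_opNorm _
          _ = ‖x + τ • h'‖ := by rw [hF, one_mul]
      have hFadd : F (x + τ • h') = ‖x‖ + τ * F h' := by
        rw [map_add, hFx, map_smul]; rfl
      have hmm := hmin' τ
      have hτh : ‖τ • h'‖ = τ * ‖h'‖ := by
        rw [norm_smul, Real.norm_eq_abs, abs_of_pos hτ]
      have hcomb : ‖x‖ + τ * F h' ≤ ‖x‖ + 2 * γ * ‖x‖ * (τ * ‖h'‖ / ‖x‖) ^ q := by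
        rw [← hFadd, ← hτh] at *
        linarith [hFb.trans (by linarith [hsm, hmm] : ‖x + τ • h'‖ ≤
          2 * ‖x‖ + 2 * γ * ‖x‖ * (‖τ • h'‖ / ‖x‖) ^ q - ‖x‖)]
      have hrw : 2 * γ * ‖x‖ * (τ * ‖h'‖ / ‖x‖) ^ q = K * τ ^ q := by
        rw [Real.div_rpow (by positivity) hxn.le, Real.mul_rpow hτ.le hhn'.le, hK]
        rw [Real.rpow_sub hxn, Real.rpow_one]
        field_simp
      rw [hrw] at hcomb
      have : τ * F h' ≤ K * τ ^ q := by linarith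
      have hτq : τ ^ q = τ ^ (q - 1) * τ := by
        rw [← Real.rpow_add_one (ne_of_gt hτ)]; ring_nf
      rw [hτq] at this
      have h' : F h' * τ ≤ (K * τ ^ (q - 1)) * τ := by linarith
      exact le_of_mul_le_mul_right h' hτ
    by_contra hpos
    push_neg at hpos
    have hFh' : 0 < F h' := hpos
    set τ0 : ℝ := (F h' / (2 * K)) ^ ((q - 1)⁻¹) with hτ0
    have hbase : 0 < F h' / (2 * K) := by positivity
    have hτ0pos : 0 < τ0 := Real.rpow_pos_of_pos hbase _
    have h2 := hstep τ0 hτ0pos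
    have hτ0q : τ0 ^ (q - 1) = F h' / (2 * K) := by
      rw [hτ0, ← Real.rpow_mul hbase.le, inv_mul_cancel₀ (ne_of_gt hq1'), Real.rpow_one]
    rw [hτ0q] at h2
    have : F h' ≤ F h' / 2 := by
      rw [mul_div_assoc'] at h2
      calc F h' ≤ K * F h' / (2 * K) := h2
        _ = F h' / 2 := by field_simp
    linarith
  have h1 := key h hh hmin
  have h2 := key (-h) (neg_ne_zero.mpr hh) (by
    intro τ
    simpa [smul_neg, sub_neg_eq_add, ← neg_smul] using hmin (-τ))
  rw [map_neg] at h2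
  linarith
end orth

section a1
variable {X : Type*} [NormedAddCommGroup X] [NormedSpace ℝ X]

lemma a1_norm_le {D : Set X} (hD : IsDictionary X D) {M : ℝ} (hM : 0 ≤ M)
    {f : X} (hf : f ∈ A1 X D M) : ‖f‖ ≤ M := by
  have hsub : A1Pre X D M ⊆ {x : X | ‖x‖ ≤ M} := by
    rintro g ⟨n, c, φ, hφ, hc, rfl⟩
    calc ‖∑ i, c i • φ i‖ ≤ ∑ i, ‖c i • φ i‖ := norm_sum_le _ _
      _ = ∑ i, |c i| := by
          apply Finset.sum_congr rfl
          intro i _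
          rw [norm_smul, Real.norm_eq_abs, hD.1 _ (hφ i), mul_one]
      _ ≤ M := hc
  have hclosed : IsClosed {x : X | ‖x‖ ≤ M} := isClosed_le (continuous_norm) continuous_const
  exact hclosed.closure_subset_iff.mpr hsub hf

lemma a1_fun_bound {D : Set X} (hD : IsDictionary X D) {M : ℝ} (hM : 0 ≤ M)
    {f : X} (hf : f ∈ A1 X D M) (F : X →L[ℝ] ℝ) (hF : ‖F‖ = 1)
    {φ₀ : X} (hφ₀ : φ₀ ∈ D) :
    F f ≤ M * sSup {x : ℝ | ∃ ψ ∈ D, x = |F ψ|} := by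
  set s0 : ℝ := sSup {x : ℝ | ∃ ψ ∈ D, x = |F ψ|} with hs0
  have hbdd : BddAbove {x : ℝ | ∃ ψ ∈ D, x = |F ψ|} := by
    refine ⟨1, ?_⟩
    rintro y ⟨ψ, hψ, rfl⟩
    calc |F ψ| ≤ ‖F‖ * ‖ψ‖ := F.le_opNorm ψ
      _ = 1 := by rw [hF, hD.1 _ hψ, mul_one]
  have hle : ∀ ψ ∈ D, |F ψ| ≤ s0 := fun ψ hψ => le_csSup hbdd ⟨ψ, hψ, rfl⟩
  have hs0nn : 0 ≤ s0 := le_trans (abs_nonneg _) (hle φ₀ hφ₀)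
  have hsub : A1Pre X D M ⊆ {x : X | F x ≤ M * s0} := by
    rintro g ⟨n, c, φ, hφ, hc, rfl⟩
    have : F (∑ i, c i • φ i) = ∑ i, c i * F (φ i) := by
      rw [map_sum]
      exact Finset.sum_congr rfl (fun i _ => by rw [map_smul]; rfl)
    rw [Set.mem_setOf_eq, this]
    calc ∑ i, c i * F (φ i) ≤ ∑ i, |c i| * s0 := by
          apply Finset.sum_le_sum
          intro i _
          calc c i * F (φ i) ≤ |c i * F (φ i)| := le_abs_self _
            _ = |c i| * |F (φ i)| := abs_mul _ _
            _ ≤ |c i| * s0 := mul_le_mul_of_nonneg_left (hle _ (hφ i)) (abs_nonneg _)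
      _ = (∑ i, |c i|) * s0 := by rw [Finset.sum_mul]
      _ ≤ M * s0 := mul_le_mul_of_nonneg_right hc hs0nn
  have hclosed : IsClosed {x : X | F x ≤ M * s0} :=
    isClosed_le F.continuous continuous_const
  exact hclosed.closure_subset_iff.mpr hsub hf
end a1

section step
variable {X : Type*} [NormedAddCommGroup X] [NormedSpace ℝ X]

lemma mySignMulSelf {x : ℝ} (hx : x ≠ 0) : Real.sign x * x = |x| := by
  rcases hx.lt_or_gt with h|h
  · simp [Real.sign_of_neg h, abs_of_neg h]
  · simp [Real.sign_of_pos h, abs_of_pos h]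

lemma myAbsSign {x : ℝ} (hx : x ≠ 0) : |Real.sign x| = 1 := by
  rcases hx.lt_or_gt with h|h
  · simp [Real.sign_of_neg h]
  · simp [Real.sign_of_pos h]

lemma step_bound {γ q : ℝ} (hq1 : 1 < q) (hγ : 0 < γ)
    (hρ : ∀ u : ℝ, 0 < u → modulusOfSmoothness X u ≤ γ * u ^ q)
    {D : Set X} (hD : IsDictionary X D) {M : ℝ} (hM : 0 < M)
    {f g : X} (hf : f ∈ A1 X D M) (hr : f - g ≠ 0)
    (F : X →L[ℝ] ℝ) (φ : X) (lam s tk : ℝ)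
    (htk : 0 < tk) (hF : ‖F‖ = 1) (hFr : F (f - g) = ‖f - g‖)
    (hFg : F g = 0)
    (hφ : φ ∈ D) (hφt : |F φ| ≥ tk * sSup {x : ℝ | ∃ ψ ∈ D, x = |F ψ|})
    (hlam : lam = Real.sign (F φ) * ‖f - g‖ * (2 * γ * q) ^ ((1 : ℝ) / (1 - q)) *
      |F φ| ^ ((1 : ℝ) / (q - 1)))
    (hmin : ∀ s' : ℝ, ‖f - s • (g + lam • φ)‖ ≤ ‖f - s' • (g + lam • φ)‖) :
    ‖f - s • (g + lam • φ)‖ ≤ ‖f - g‖ *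
      (1 - (q - 1) / q * (2 * γ * q) ^ ((1 : ℝ) / (1 - q)) *
        (tk * ‖f - g‖ / M) ^ (q / (q - 1))) := by
  have hq0 : q ≠ 0 := by positivity
  have hq1' : (0:ℝ) < q - 1 := by linarith
  set r : X := f - g with hrdef
  set R : ℝ := ‖r‖ with hR
  have hRpos : 0 < R := norm_pos_iff.mpr hr
  set A : ℝ := (2 * γ * q) ^ ((1 : ℝ) / (1 - q)) with hA
  have h2γq : (0:ℝ) < 2 * γ * q := by positivity
  have hApos : 0 < A := Real.rpow_pos_of_pos h2γq _
  have hAq1 : A ^ (q - 1) = (2 * γ * q)⁻¹ := by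
    rw [hA, ← Real.rpow_mul h2γq.le]
    have : (1 : ℝ) / (1 - q) * (q - 1) = -1 := by
      rw [div_mul_eq_mul_div, one_mul, div_eq_iff (by linarith : (1:ℝ) - q ≠ 0)]; ring
    rw [this, Real.rpow_neg_one]
  -- F f = R
  have hFf : F f = R := by
    have : f = r + g := by rw [hrdef]; abel
    rw [this, map_add, hFr, hFg, add_zero]
  -- lower bound on |F φ|
  set s0 : ℝ := sSup {x : ℝ | ∃ ψ ∈ D, x = |F ψ|} with hs0
  have hs0R : R ≤ M * s0 := by rw [← hFf]; exact a1_fun_bound hD hM.le hf F hF hφ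
  set B : ℝ := |F φ| with hB
  have hBt : tk * R / M ≤ B := by
    have h1 : tk * (R / M) ≤ tk * s0 := by
      apply mul_le_mul_of_nonneg_left _ htk.le
      rw [div_le_iff₀ hM]
      linarith [hs0R]
    calc tk * R / M = tk * (R / M) := by ring
      _ ≤ tk * s0 := h1
      _ ≤ B := hφt
  have hBpos : 0 < B := lt_of_lt_of_le (by positivity) hBt
  have hFφne : F φ ≠ 0 := abs_pos.mp hBpos
  -- p
  set p : ℝ := q / (q - 1) with hp
  have hBp : B ^ ((1:ℝ)/(q-1)) * B = B ^ p := by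
    rw [← Real.rpow_add_one (ne_of_gt hBpos)]
    congr 1
    rw [hp]
    field_simp
    ring
  -- lam computations
  have hlamF : lam * F φ = R * A * B ^ p := by
    rw [hlam]
    have : Real.sign (F φ) * R * A * B ^ ((1:ℝ)/(q-1)) * F φ
        = (Real.sign (F φ) * F φ) * (R * A * (B ^ ((1:ℝ)/(q-1)))) := by ring
    rw [this, mySignMulSelf hFφne, ← hB]
    rw [← hBp]; ring
  have hlamabs : |lam| = R * A * B ^ ((1:ℝ)/(q-1)) := by
    rw [hlam, abs_mul, abs_mul, abs_mul, myAbsSign hFφne, one_mul]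
    rw [abs_of_nonneg (norm_nonneg r), abs_of_pos hApos,
      abs_of_nonneg (Real.rpow_nonneg (abs_nonneg _) _)]
  -- smoothness bound
  have hφ1 : ‖φ‖ = 1 := hD.1 _ hφ
  have hnlam : ‖lam • φ‖ = |lam| := by
    rw [norm_smul, Real.norm_eq_abs, hφ1, mul_one]
  have hsm := smooth_ineq hq0 hγ hρ (x := r) (y := lam • φ) hr
  have hFb : F (r + lam • φ) ≤ ‖r + lam • φ‖ := by
    calc F (r + lam • φ) ≤ ‖F (r + lam • φ)‖ := le_abs_self _
      _ ≤ ‖F‖ * ‖r + lam • φ‖ := F.le_opNorm _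
      _ = ‖r + lam • φ‖ := by rw [hF, one_mul]
  have hFadd : F (r + lam • φ) = R + R * A * B ^ p := by
    rw [map_add, hFr, map_smul, smul_eq_mul, hlamF]
  -- compute the rho term
  have hterm : 2 * γ * R * (‖lam • φ‖ / R) ^ q = R * (A / q) * B ^ p := by
    rw [hnlam, hlamabs]
    have h1 : R * A * B ^ ((1:ℝ)/(q-1)) / R = A * B ^ ((1:ℝ)/(q-1)) := by
      field_simp [hRpos.ne']
    rw [h1, Real.mul_rpow hApos.le (Real.rpow_nonneg (abs_nonneg _) _)]
    have hAq : A ^ q = A * (2 * γ * q)⁻¹ := by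
      have h2 : A ^ q = A ^ (q - 1) * A := by
        rw [← Real.rpow_add_one (ne_of_gt hApos) (q - 1), sub_add_cancel]
      rw [h2, hAq1]; ring
    have hBq : (B ^ ((1:ℝ)/(q-1))) ^ q = B ^ p := by
      rw [← Real.rpow_mul (abs_nonneg _)]
      congr 1
      rw [hp]; ring
    rw [hAq, hBq]
    field_simp
  have hchain : ‖r - lam • φ‖ ≤ R * (1 - (q - 1) / q * A * B ^ p) := by
    have h1 : ‖r + lam • φ‖ + ‖r - lam • φ‖ ≤ 2 * R + R * (A / q) * B ^ p := by
      rw [← hterm]; exact hsm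
    have h2 : R + R * A * B ^ p ≤ ‖r + lam • φ‖ := by rw [← hFadd]; exact hFb
    have hid : R * (1 - (q - 1) / q * A * B ^ p)
        = 2 * R + R * (A / q) * B ^ p - (R + R * A * B ^ p) := by
      field_simp
      ring
    linarith
  have hBge : (tk * R / M) ^ p ≤ B ^ p :=
    Real.rpow_le_rpow (by positivity) hBt (by positivity)
  have h1s : ‖f - s • (g + lam • φ)‖ ≤ ‖r - lam • φ‖ := by
    have := hmin 1
    rw [one_smul] at this
    have hrw : f - (g + lam • φ) = r - lam • φ := by rw [hrdef]; abel
    rwa [hrw] at this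
  have hc : 0 ≤ (q - 1) / q * A := by positivity
  have hmono : (q - 1) / q * A * (tk * R / M) ^ p ≤ (q - 1) / q * A * B ^ p :=
    mul_le_mul_of_nonneg_left hBge hc
  calc ‖f - s • (g + lam • φ)‖ ≤ R * (1 - (q - 1) / q * A * B ^ p) := h1s.trans hchain
    _ ≤ R * (1 - (q - 1) / q * A * (tk * R / M) ^ p) :=
        mul_le_mul_of_nonneg_left (by linarith) hRpos.le

end step


set_option maxHeartbeats 1000000 in
/-- Explicit error bound of the Weak Rescaled Pure Greedy Algorithm WRPGA({t_k}, D) in a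
Banach space with `ρ(u) ≤ γ u^q`, `1 < q ≤ 2`: for `f ∈ A₁(D, M)` the iterates satisfy, for
`m ≥ 2`,
`‖f − f_m‖ ≤ M (t₁^{q/(q−1)} + ((q−1)/q)(2γq)^{1/(1−q)} ∑_{k=2}^m t_k^{q/(q−1)})^{1/q − 1}`. -/
theorem wrpga_banach_explicit_bound {X : Type*} [NormedAddCommGroup X] [NormedSpace ℝ X]
    [CompleteSpace X]
    (γ q : ℝ) (hq1 : 1 < q) (hq2 : q ≤ 2) (hγ : 0 < γ)
    (hρ : ∀ u : ℝ, 0 < u → modulusOfSmoothness X u ≤ γ * u ^ q)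
    (D : Set X) (hD : IsDictionary X D)
    (t : ℕ → ℝ) (ht : ∀ k : ℕ, t k ∈ Set.Ioc (0 : ℝ) 1)
    (M : ℝ) (hM : 0 < M) (f : X) (hf : f ∈ A1 X D M)
    (fseq : ℕ → X) (h0 : fseq 0 = 0)
    (hstep : ∀ m : ℕ,
      (fseq m = f → fseq (m + 1) = f) ∧
      (fseq m ≠ f → ∃ (F : X →L[ℝ] ℝ) (φ : X) (lam s : ℝ),
        ‖F‖ = 1 ∧ F (f - fseq m) = ‖f - fseq m‖ ∧
        φ ∈ D ∧ |F φ| ≥ t (m + 1) * sSup {x : ℝ | ∃ ψ ∈ D, x = |F ψ|} ∧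
        lam = Real.sign (F φ) * ‖f - fseq m‖ * (2 * γ * q) ^ ((1 : ℝ) / (1 - q)) *
          |F φ| ^ ((1 : ℝ) / (q - 1)) ∧
        (∀ s' : ℝ, ‖f - s • (fseq m + lam • φ)‖ ≤ ‖f - s' • (fseq m + lam • φ)‖) ∧
        fseq (m + 1) = s • (fseq m + lam • φ))) :
    ∀ m : ℕ, 2 ≤ m →
      ‖f - fseq m‖ ≤
        M * (t 1 ^ (q / (q - 1)) +
          (q - 1) / q * (2 * γ * q) ^ ((1 : ℝ) / (1 - q)) *
            ∑ k ∈ Finset.Icc 2 m, t k ^ (q / (q - 1))) ^ ((1 : ℝ) / q - 1) := by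
  have hq0 : (0:ℝ) < q := by linarith
  have hq1' : (0:ℝ) < q - 1 := by linarith
  have h2γq : (0:ℝ) < 2 * γ * q := by positivity
  set p : ℝ := q / (q - 1) with hp
  have hppos : 0 < p := by positivity
  set A : ℝ := (2 * γ * q) ^ ((1 : ℝ) / (1 - q)) with hA
  have hApos : 0 < A := Real.rpow_pos_of_pos h2γq _
  set c : ℝ := (q - 1) / q * A with hc
  have hcpos : 0 < c := by positivity
  set E : ℝ := (1 : ℝ) / q - 1 with hE
  have hEneg : E < 0 := by
    rw [hE]
    have : (1:ℝ)/q < 1 := by rw [div_lt_one hq0]; linarith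
    linarith
  have hEp : E * p = -1 := by
    rw [hE, hp]; field_simp; ring
  have hE1 : E + 1 = 1/q := by rw [hE]; ring
  set S : ℕ → ℝ := fun m => t 1 ^ p + c * ∑ k ∈ Finset.Icc 2 m, t k ^ p with hS
  have htp : ∀ k, 0 < t k ^ p := fun k => Real.rpow_pos_of_pos (ht k).1 _
  have hSpos : ∀ m, 0 < S m := by
    intro m
    rw [hS]
    have hsum : 0 ≤ ∑ k ∈ Finset.Icc 2 m, t k ^ p :=
      Finset.sum_nonneg (fun k _ => (htp k).le)
    have := htp 1
    positivity
  have hSsucc : ∀ k, 1 ≤ k → S (k + 1) = S k + c * t (k + 1) ^ p := by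
    intro k hk
    rw [hS]
    simp only
    rw [Finset.sum_Icc_succ_top (by omega : 2 ≤ k + 1)]
    ring
  -- main induction
  have main : ∀ m : ℕ, 1 ≤ m → ‖f - fseq m‖ ≤ M * S m ^ E := by
    intro m hm
    induction m, hm using Nat.le_induction with
    | base =>
      by_cases h1 : fseq 0 = f
      · rw [(hstep 0).1 h1]
        simp only [sub_self, norm_zero]
        exact mul_nonneg hM.le (Real.rpow_pos_of_pos (hSpos _) _).le
      · obtain ⟨F, φ, lam, s, hF, hFr, hφ, hφt, hlam, hmin, hnext⟩ := (hstep 0).2 h1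
        have h2 : ‖f - fseq 1‖ ≤ ‖f‖ := by
          rw [hnext]
          calc ‖f - s • (fseq 0 + lam • φ)‖ ≤ ‖f - (0:ℝ) • (fseq 0 + lam • φ)‖ := hmin 0
            _ = ‖f‖ := by rw [zero_smul, sub_zero]
        have h3 : ‖f‖ ≤ M := a1_norm_le hD hM.le hf
        have hS1 : S 1 = t 1 ^ p := by
          rw [hS]; simp
        have hS1le : S 1 ≤ 1 := by
          rw [hS1]
          exact Real.rpow_le_one (ht 1).1.le (ht 1).2 hppos.le
        have h4 : (1:ℝ) ≤ S 1 ^ E :=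
          Real.one_le_rpow_of_pos_of_le_one_of_nonpos (hSpos 1) hS1le hEneg.le
        calc ‖f - fseq 1‖ ≤ M := h2.trans h3
          _ = M * 1 := (mul_one M).symm
          _ ≤ M * S 1 ^ E := mul_le_mul_of_nonneg_left h4 hM.le
    | succ k hk IH =>
      by_cases hks : fseq k = f
      · rw [(hstep k).1 hks]
        simp only [sub_self, norm_zero]
        exact mul_nonneg hM.le (Real.rpow_pos_of_pos (hSpos _) _).le
      · obtain ⟨F, φ, lam, s, hF, hFr, hφ, hφt, hlam, hmin, hnext⟩ := (hstep k).2 hks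
        have hr : f - fseq k ≠ 0 := sub_ne_zero.mpr (Ne.symm hks)
        -- orthogonality F (fseq k) = 0
        have hFg : F (fseq k) = 0 := by
          obtain ⟨j, rfl⟩ : ∃ j, k = j + 1 := ⟨k - 1, by omega⟩
          have hprev : fseq j ≠ f := fun h => hks ((hstep j).1 h)
          obtain ⟨F', φ', lam', s', _, _, _, _, _, hmin', hnext'⟩ := (hstep j).2 hprev
          set h' : X := fseq j + lam' • φ' with hh'
          have hbirk : ∀ τ : ℝ, ‖f - fseq (j+1)‖ ≤ ‖(f - fseq (j+1)) - τ • h'‖ := by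
            intro τ
            have h1 : (f - fseq (j+1)) - τ • h' = f - (s' + τ) • h' := by
              rw [hnext', add_smul]; abel
            rw [h1, hnext']
            exact hmin' (s' + τ)
          have horth : F h' = 0 := birkhoff_orth hq1 hγ hρ hr hbirk F hF hFr
          rw [hnext', map_smul, smul_eq_mul, horth, mul_zero]
        -- apply the step bound
        have hsb := step_bound hq1 hγ hρ hD hM hf hr F φ lam s (t (k+1)) (ht (k+1)).1
          hF hFr hFg hφ hφt hlam hmin
        rw [← hnext] at hsb
        -- algebra
        set aK : ℝ := ‖f - fseq k‖ with haK
        have haKnn : 0 ≤ aK := norm_nonneg _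
        set T : ℝ := t (k + 1) with hT
        have hTpos : 0 < T := (ht (k+1)).1
        have hSk := hSpos k
        have hSk1 := hSpos (k+1)
        have hSrec := hSsucc k hk
        have hrpow_nn : (0:ℝ) ≤ c * (T * aK / M) ^ p := by positivity
        by_cases hcase : aK ≤ M * S (k+1) ^ E
        · calc ‖f - fseq (k+1)‖ ≤ aK * (1 - c * (T * aK / M) ^ p) := hsb
            _ ≤ aK * 1 := mul_le_mul_of_nonneg_left (by linarith) haKnn
            _ = aK := mul_one aK
            _ ≤ M * S (k+1) ^ E := hcase
        · push_neg at hcase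
          have hSE : 0 < S (k+1) ^ E := Real.rpow_pos_of_pos hSk1 _
          have h1 : T * S (k+1) ^ E ≤ T * aK / M := by
            rw [le_div_iff₀ hM]
            calc T * S (k+1) ^ E * M = T * (M * S (k+1) ^ E) := by ring
              _ ≤ T * aK := mul_le_mul_of_nonneg_left hcase.le hTpos.le
          have h2 : (T * S (k+1) ^ E) ^ p ≤ (T * aK / M) ^ p :=
            Real.rpow_le_rpow (by positivity) h1 hppos.le
          have h3 : (T * S (k+1) ^ E) ^ p = T ^ p / S (k+1) := by
            rw [Real.mul_rpow hTpos.le hSE.le, ← Real.rpow_mul hSk1.le, hEp,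
              Real.rpow_neg_one]
            rw [div_eq_mul_inv]
          have h4 : c * (T ^ p / S (k+1)) ≤ c * (T * aK / M) ^ p := by
            rw [← h3]
            exact mul_le_mul_of_nonneg_left h2 hcpos.le
          have h5 : 1 - c * (T * aK / M) ^ p ≤ S k / S (k+1) := by
            have : 1 - c * (T ^ p / S (k+1)) = S k / S (k+1) := by
              field_simp
              linarith [hSrec]
            linarith
          have h6 : aK * (1 - c * (T * aK / M) ^ p) ≤ (M * S k ^ E) * (S k / S (k+1)) := by
            have hnn2 : 0 ≤ S k / S (k+1) := by positivity
            have hub : aK * (1 - c * (T * aK / M) ^ p) ≤ aK * (S k / S (k+1)) :=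
              mul_le_mul_of_nonneg_left h5 haKnn
            have : aK * (S k / S (k+1)) ≤ (M * S k ^ E) * (S k / S (k+1)) :=
              mul_le_mul_of_nonneg_right IH hnn2
            linarith
          have h7 : (M * S k ^ E) * (S k / S (k+1)) ≤ M * S (k+1) ^ E := by
            have hSkE1 : S k ^ E * S k = S k ^ (E + 1) :=
              (Real.rpow_add_one hSk.ne' E).symm
            have hmono : S k ^ (E + 1) ≤ S (k+1) ^ (E + 1) := by
              apply Real.rpow_le_rpow hSk.le _ (by rw [hE1]; positivity)
              rw [hSrec]
              have := mul_pos hcpos (htp (k+1))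
              linarith
            have hSk1E1 : S (k+1) ^ (E + 1) = S (k+1) ^ E * S (k+1) :=
              Real.rpow_add_one hSk1.ne' E
            calc (M * S k ^ E) * (S k / S (k+1)) = M * (S k ^ E * S k) / S (k+1) := by ring
              _ = M * S k ^ (E + 1) / S (k+1) := by rw [hSkE1]
              _ ≤ M * S (k+1) ^ (E + 1) / S (k+1) := by
                  gcongr
              _ = M * S (k+1) ^ E := by
                  rw [hSk1E1, mul_div_assoc, mul_div_cancel_right₀ _ hSk1.ne']
          calc ‖f - fseq (k+1)‖ ≤ aK * (1 - c * (T * aK / M) ^ p) := hsb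
            _ ≤ (M * S k ^ E) * (S k / S (k+1)) := h6
            _ ≤ M * S (k+1) ^ E := h7
  intro m hm
  exact main m (by omega)
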